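/- Let Θ, Λ, Λ₁ be frames of a family of compatible frames with Θ ⊥ Λ | Λ₁, and let p be a probability potential with d(p) = Θ. Then for every λ ∈ Λ: max_{θ∈Θ : θ∼λ} p(θ) = max_{λ₁∈Λ₁ : λ₁∼λ} ( max_{θ∈Θ : θ∼λ₁} p(θ) ). In other words, the max-transport satisfies t^max_Λ(p) = t^max_Λ(t^max_{Λ₁}(p)). -/

import Mathlib

open scoped NNReal

/-- A family of compatible frames (f.c.f.): a collection of finite nonempty frames
together with (unique) refinings between them, closed under composition, containing
identities, with minimal common refinements (binary joins). -/
structure FCF where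
  /-- the frames of the family -/
  Frame : Type
  /-- the elements of each frame -/
  El : Frame → Type
  elFintype : ∀ Θ, Fintype (El Θ)
  elNonempty : ∀ Θ, Nonempty (El Θ)
  /-- `le Θ Λ` holds iff the family contains a refining of `Θ` to `Λ`. -/
  le : Frame → Frame → Prop
  le_refl : ∀ Θ, le Θ Θ
  le_trans : ∀ {Θ Λ Ξ}, le Θ Λ → le Λ Ξ → le Θ Ξ
  le_antisymm : ∀ {Θ Λ}, le Θ Λ → le Λ Θ → Θ = Λ
  /-- the (unique) refining map of `Θ` to `Λ`, when `le Θ Λ` -/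
  τ : ∀ {Θ Λ}, le Θ Λ → El Θ → Set (El Λ)
  τ_nonempty : ∀ {Θ Λ} (h : le Θ Λ) (θ : El Θ), (τ h θ).Nonempty
  τ_disjoint : ∀ {Θ Λ} (h : le Θ Λ) (θ θ' : El Θ), θ ≠ θ' → τ h θ ∩ τ h θ' = ∅
  τ_cover : ∀ {Θ Λ} (h : le Θ Λ) (x : El Λ), ∃ θ, x ∈ τ h θ
  /-- the identity refining -/
  τ_refl : ∀ {Θ} (h : le Θ Θ) (θ : El Θ), τ h θ = {θ}
  /-- closure under composition of refinings -/
  τ_comp : ∀ {Θ Λ Ξ} (h₁ : le Θ Λ) (h₂ : le Λ Ξ) (h₃ : le Θ Ξ) (θ : El Θ),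
    τ h₃ θ = ⋃ lam ∈ τ h₁ θ, τ h₂ lam
  /-- identity of coarsenings: two coarsenings of a frame with the same blocks coincide -/
  coarsening_unique : ∀ {Θ₁ Θ₂ Λ} (h₁ : le Θ₁ Λ) (h₂ : le Θ₂ Λ),
    (∀ θ₁, ∃ θ₂, τ h₁ θ₁ = τ h₂ θ₂) → (∀ θ₂, ∃ θ₁, τ h₁ θ₁ = τ h₂ θ₂) → Θ₁ = Θ₂
  /-- minimal common refinement of two frames -/
  sup : Frame → Frame → Frame
  le_sup_left : ∀ Θ Λ, le Θ (sup Θ Λ)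
  le_sup_right : ∀ Θ Λ, le Λ (sup Θ Λ)
  sup_le : ∀ {Θ Λ Ξ}, le Θ Ξ → le Λ Ξ → le (sup Θ Λ) Ξ
  /-- every element of the minimal common refinement is the (unique) intersection point
  of a block of each factor -/
  sup_atom : ∀ {Θ Λ} (h₁ : le Θ (sup Θ Λ)) (h₂ : le Λ (sup Θ Λ)) (x : El (sup Θ Λ)),
    ∃ (θ : El Θ) (lam : El Λ), τ h₁ θ ∩ τ h₂ lam = {x}

namespace FCF

instance (F : FCF) (Θ : F.Frame) : Fintype (F.El Θ) := F.elFintype Θ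

instance (F : FCF) (Θ : F.Frame) : Nonempty (F.El Θ) := F.elNonempty Θ

instance instSemilatticeSup (F : FCF) : SemilatticeSup F.Frame where
  le := F.le
  le_refl := F.le_refl
  le_trans := fun _ _ _ => F.le_trans
  le_antisymm := fun _ _ => F.le_antisymm
  sup := F.sup
  le_sup_left := F.le_sup_left
  le_sup_right := F.le_sup_right
  sup_le := fun _ _ _ h h' => F.sup_le h h'

/-- the indicator potential `f_p` of the support of a potential -/
noncomputable def fpot {X : Type} (p : X → ℝ≥0) : X → ℝ≥0 := fun x =>
  haveI := Classical.propDecidable (0 < p x)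
  if 0 < p x then 1 else 0

/-- the support of a potential -/
def psupp {X : Type} (p : X → ℝ≥0) : Set X := {x | 0 < p x}

/-- the likelihood (plausibility of singletons) function of a set potential -/
noncomputable def plfn {X : Type} (m : Set X → ℝ≥0) : X → ℝ≥0 :=
  fun x => ∑ᶠ (S : Set X) (_ : x ∈ S), m S

variable (F : FCF)

/-- `θ` and `lam` are compatible: their refinings to the minimal common refinement
of the two frames intersect. -/
def compat {Θ Λ : F.Frame} (θ : F.El Θ) (lam : F.El Λ) : Prop :=
  (F.τ (F.le_sup_left Θ Λ) θ ∩ F.τ (F.le_sup_right Θ Λ) lam).Nonempty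

/-- `(θ₁, θ₂, lam) ∈ R(Θ₁, Θ₂, Λ)`: joint compatibility of a triple. -/
def compat3 {Θ₁ Θ₂ Λ : F.Frame} (θ₁ : F.El Θ₁) (θ₂ : F.El Θ₂) (lam : F.El Λ) : Prop :=
  (F.τ (F.le_trans (F.le_sup_left Θ₁ Θ₂) (F.le_sup_left (F.sup Θ₁ Θ₂) Λ)) θ₁ ∩
    F.τ (F.le_trans (F.le_sup_right Θ₁ Θ₂) (F.le_sup_left (F.sup Θ₁ Θ₂) Λ)) θ₂ ∩
    F.τ (F.le_sup_right (F.sup Θ₁ Θ₂) Λ) lam).Nonempty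

/-- `Θ₁ ⊥ Θ₂ | Λ` : conditional independence of two frames given a third,
`R_λ(Θ₁,Θ₂) = R_λ(Θ₁) × R_λ(Θ₂)` for every `λ ∈ Λ`. -/
def CondIndep (Θ₁ Θ₂ Λ : F.Frame) : Prop :=
  ∀ (lam : F.El Λ) (θ₁ : F.El Θ₁) (θ₂ : F.El Θ₂),
    F.compat3 θ₁ θ₂ lam ↔ (F.compat θ₁ lam ∧ F.compat θ₂ lam)

/-- joint compatibility of a family of elements together with `lam`. -/
def compatFam {ι : Type} {Θ : ι → F.Frame} {Λ : F.Frame}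
    (θ : ∀ i, F.El (Θ i)) (lam : F.El Λ) : Prop :=
  ∃ (Ξ : F.Frame) (hΘ : ∀ i, F.le (Θ i) Ξ) (hΛ : F.le Λ Ξ) (x : F.El Ξ),
    (∀ i, x ∈ F.τ (hΘ i) (θ i)) ∧ x ∈ F.τ hΛ lam

/-- `⊥ {Θ_i : i ∈ ι} | Λ` : conditional independence of a family of frames given `Λ`,
`R_λ(Θ₁,…,Θₙ) = R_λ(Θ₁) × ⋯ × R_λ(Θₙ)` for every `λ ∈ Λ`. -/
def CondIndepFam {ι : Type} (Θ : ι → F.Frame) (Λ : F.Frame) : Prop :=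
  ∀ (lam : F.El Λ) (θ : ∀ i, F.El (Θ i)),
    F.compatFam θ lam ↔ ∀ i, F.compat (θ i) lam

/-- `t_Λ(x)`, the unique element of the coarsening `Λ` whose block contains `x`. -/
noncomputable def proj {Λ Θ : F.Frame} (h : F.le Λ Θ) (x : F.El Θ) : F.El Λ :=
  (F.τ_cover h x).choose

/-- probability potentials on the frame `Θ` -/
abbrev Pot (Θ : F.Frame) : Type := F.El Θ → ℝ≥0

/-- the combination of two probability potentials, on the join of their domains -/
noncomputable def combine {Θ₁ Θ₂ : F.Frame} (p₁ : F.Pot Θ₁) (p₂ : F.Pot Θ₂) :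
    F.Pot (F.sup Θ₁ Θ₂) :=
  fun x => p₁ (F.proj (F.le_sup_left Θ₁ Θ₂) x) * p₂ (F.proj (F.le_sup_right Θ₁ Θ₂) x)

/-- the transport `π_Λ(p)` of a probability potential to the frame `Λ` -/
noncomputable def transport {Θ : F.Frame} (p : F.Pot Θ) (Λ : F.Frame) : F.Pot Λ :=
  fun lam => ∑ᶠ (θ : F.El Θ) (_ : F.compat θ lam), p θ

/-- the max-transport `t^max_Λ(p)` of a probability potential to the frame `Λ` -/
noncomputable def maxTransport {Θ : F.Frame} (p : F.Pot Θ) (Λ : F.Frame) : F.Pot Λ :=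
  fun lam => ⨆ (θ : F.El Θ) (_ : F.compat θ lam), p θ

/-- combination of two set potentials, on the join of their domains -/
noncomputable def setCombine {Θ₁ Θ₂ : F.Frame} (m₁ : Set (F.El Θ₁) → ℝ≥0)
    (m₂ : Set (F.El Θ₂) → ℝ≥0) : Set (F.El (F.sup Θ₁ Θ₂)) → ℝ≥0 :=
  fun S => ∑ᶠ (S₁ : Set (F.El Θ₁)) (S₂ : Set (F.El Θ₂))
    (_ : (⋃ θ ∈ S₁, F.τ (F.le_sup_left Θ₁ Θ₂) θ) ∩
         (⋃ θ ∈ S₂, F.τ (F.le_sup_right Θ₁ Θ₂) θ) = S),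
    m₁ S₁ * m₂ S₂

/-- the conditional `p_{Θ|Λ} = π_Θ(p) · (π_Λ(p))⁻¹` of `p` for `Θ` given `Λ ≤ Θ` -/
noncomputable def condl {Δ : F.Frame} (p : F.Pot Δ) {Λ Θ : F.Frame} (h : F.le Λ Θ) :
    F.Pot Θ :=
  fun θ => F.transport p Θ θ * (F.transport p Λ (F.proj h θ))⁻¹

/-- the conditional `p_{Θ|Λ} = π_{Θ∨Λ}(p) · (π_Λ(p))⁻¹` of `p` for arbitrary `Θ` given `Λ` -/
noncomputable def condl2 {Δ : F.Frame} (p : F.Pot Δ) (Θ Λ : F.Frame) :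
    F.Pot (F.sup Θ Λ) :=
  fun x => F.transport p (F.sup Θ Λ) x *
    (F.transport p Λ (F.proj (F.le_sup_right Θ Λ) x))⁻¹

/-- the solution set `s_p^Λ(lam)`: maximizers of `p` among elements compatible with `lam` -/
noncomputable def solSet {Θ : F.Frame} (p : F.Pot Θ) (Λ : F.Frame) (lam : F.El Λ) :
    Set (F.El Θ) :=
  {θ | F.compat θ lam ∧ p θ = F.maxTransport p Λ lam}

end FCF

namespace FCF

/-- If `θ` and `lam` have blocks meeting in some common refinement, they are compatible. -/
lemma compat_of_common (F : FCF) {Θ Λ Ξ : F.Frame} {θ : F.El Θ} {lam : F.El Λ}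
    (h1 : F.le Θ Ξ) (h2 : F.le Λ Ξ) {x : F.El Ξ}
    (hx1 : x ∈ F.τ h1 θ) (hx2 : x ∈ F.τ h2 lam) : F.compat θ lam := by
  have hΞ : F.le (F.sup Θ Λ) Ξ := F.sup_le h1 h2
  rw [F.τ_comp (F.le_sup_left Θ Λ) hΞ h1 θ] at hx1
  rw [F.τ_comp (F.le_sup_right Θ Λ) hΞ h2 lam] at hx2
  simp only [Set.mem_iUnion] at hx1 hx2
  obtain ⟨y, hy, hxy⟩ := hx1
  obtain ⟨z, hz, hxz⟩ := hx2
  have hyz : y = z := by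
    by_contra hne
    have := F.τ_disjoint hΞ y z hne
    have : x ∈ F.τ hΞ y ∩ F.τ hΞ z := ⟨hxy, hxz⟩
    rw [F.τ_disjoint hΞ y z hne] at this
    exact this
  exact ⟨y, hy, hyz ▸ hz⟩

lemma compat_symm (F : FCF) {Θ Λ : F.Frame} {θ : F.El Θ} {lam : F.El Λ}
    (h : F.compat θ lam) : F.compat lam θ := by
  obtain ⟨x, hx1, hx2⟩ := h
  exact F.compat_of_common (F.le_sup_right Θ Λ) (F.le_sup_left Θ Λ) hx2 hx1

/-- Key equivalence derived from conditional independence. -/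
lemma compat_iff_exists (F : FCF) {Θ Λ Λ₁ : F.Frame} (hCI : F.CondIndep Θ Λ Λ₁)
    (lam : F.El Λ) (θ : F.El Θ) :
    F.compat θ lam ↔ ∃ lam1 : F.El Λ₁, F.compat lam1 lam ∧ F.compat θ lam1 := by
  constructor
  · rintro ⟨x, hx1, hx2⟩
    set Ω := F.sup (F.sup Θ Λ) Λ₁
    have hl : F.le (F.sup Θ Λ) Ω := F.le_sup_left _ _
    obtain ⟨z, hz⟩ := F.τ_nonempty hl x
    have hzθ : z ∈ F.τ (F.le_trans (F.le_sup_left Θ Λ) hl) θ := by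
      rw [F.τ_comp (F.le_sup_left Θ Λ) hl (F.le_trans (F.le_sup_left Θ Λ) hl) θ]
      exact Set.mem_iUnion₂.mpr ⟨x, hx1, hz⟩
    have hzlam : z ∈ F.τ (F.le_trans (F.le_sup_right Θ Λ) hl) lam := by
      rw [F.τ_comp (F.le_sup_right Θ Λ) hl (F.le_trans (F.le_sup_right Θ Λ) hl) lam]
      exact Set.mem_iUnion₂.mpr ⟨x, hx2, hz⟩
    obtain ⟨lam1, hlam1⟩ := F.τ_cover (F.le_sup_right (F.sup Θ Λ) Λ₁) z
    have h3 : F.compat3 θ lam lam1 := ⟨z, ⟨hzθ, hzlam⟩, hlam1⟩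
    obtain ⟨hθ1, hlam1'⟩ := (hCI lam1 θ lam).mp h3
    exact ⟨lam1, F.compat_symm hlam1', hθ1⟩
  · rintro ⟨lam1, h1, h2⟩
    have h3 : F.compat3 θ lam lam1 := (hCI lam1 θ lam).mpr ⟨h2, F.compat_symm h1⟩
    obtain ⟨z, ⟨hz1, hz2⟩, _⟩ := h3
    exact F.compat_of_common _ _ hz1 hz2

private lemma bdd_range {X : Type} [Fintype X] (f : X → ℝ≥0) :
    BddAbove (Set.range f) := (Set.finite_range f).bddAbove

/-- (Transport axiom for the max/product algebra.) If `Θ ⊥ Λ | Λ₁`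
and `d(p) = Θ`, then `max_{θ∼λ} p(θ) = max_{λ₁∼λ} max_{θ∼λ₁} p(θ)` for every `λ ∈ Λ`,
i.e. `t^max_Λ(p) = t^max_Λ(t^max_{Λ₁}(p))`. -/
theorem maxTransport_maxTransport (F : FCF) (Θ Λ Λ₁ : F.Frame)
    (hCI : F.CondIndep Θ Λ Λ₁) (p : F.Pot Θ) :
    (∀ lam : F.El Λ,
      (⨆ (θ : F.El Θ) (_ : F.compat θ lam), p θ) =
        ⨆ (lam1 : F.El Λ₁) (_ : F.compat lam1 lam),
          ⨆ (θ : F.El Θ) (_ : F.compat θ lam1), p θ) ∧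
    F.maxTransport p Λ = F.maxTransport (F.maxTransport p Λ₁) Λ := by
  have main : ∀ lam : F.El Λ,
      (⨆ (θ : F.El Θ) (_ : F.compat θ lam), p θ) =
        ⨆ (lam1 : F.El Λ₁) (_ : F.compat lam1 lam),
          ⨆ (θ : F.El Θ) (_ : F.compat θ lam1), p θ := by
    intro lam
    apply _root_.le_antisymm
    · apply ciSup_le
      intro θ
      by_cases hc : F.compat θ lam
      · rw [ciSup_pos hc]
        obtain ⟨lam1, h1, h2⟩ := (F.compat_iff_exists hCI lam θ).mp hc
        calc p θ = ⨆ _ : F.compat θ lam1, p θ :=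
              (ciSup_pos (f := fun _ => p θ) h2).symm
          _ ≤ ⨆ (θ' : F.El Θ) (_ : F.compat θ' lam1), p θ' :=
              le_ciSup (f := fun θ' => ⨆ (_ : F.compat θ' lam1), p θ') (bdd_range _) θ
          _ = ⨆ _ : F.compat lam1 lam,
              ⨆ (θ' : F.El Θ) (_ : F.compat θ' lam1), p θ' :=
              (ciSup_pos (f := fun _ => ⨆ (θ' : F.El Θ) (_ : F.compat θ' lam1), p θ') h1).symm
          _ ≤ _ := le_ciSup (f := fun lam1 => ⨆ (_ : F.compat lam1 lam),
              ⨆ (θ' : F.El Θ) (_ : F.compat θ' lam1), p θ') (bdd_range _) lam1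
      · haveI : IsEmpty (F.compat θ lam) := ⟨hc⟩
        rw [ciSup_of_empty]
        exact zero_le
    · apply ciSup_le
      intro lam1
      by_cases h1 : F.compat lam1 lam
      · rw [ciSup_pos h1]
        apply ciSup_le
        intro θ
        by_cases h2 : F.compat θ lam1
        · rw [ciSup_pos h2]
          have hc : F.compat θ lam := (F.compat_iff_exists hCI lam θ).mpr ⟨lam1, h1, h2⟩
          calc p θ = ⨆ _ : F.compat θ lam, p θ :=
              (ciSup_pos (f := fun _ => p θ) hc).symm
            _ ≤ _ := le_ciSup (f := fun θ => ⨆ (_ : F.compat θ lam), p θ)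
              (bdd_range _) θ
        · haveI : IsEmpty (F.compat θ lam1) := ⟨h2⟩
          rw [ciSup_of_empty]
          exact zero_le
      · haveI : IsEmpty (F.compat lam1 lam) := ⟨h1⟩
        rw [ciSup_of_empty]
        exact zero_le
  exact ⟨main, funext fun lam => main lam⟩

end FCF
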